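/- Let G = ⟨⟨a₁, a₃⟩⟩ with the recursive generators above, H₁ and H₃ the normal closures in G of ⟨⟨a₁⟩⟩ and ⟨⟨a₃⟩⟩ respectively, and U = ⟨⟨γ₁,γ₂⟩⟩ as above. Then H₁ ∩ H₃ = {(x, x⁻¹) : x ∈ U}, and the projection to the second coordinate gives an isomorphism H₁ ∩ H₃ ≅ U. -/

import Mathlib

open Equiv

/-- Vertices of the infinite rooted binary tree: finite words over `Bool`.
The parent of a nonempty word is `dropLast`. -/
abbrev Wd := List Bool

/-- The group `Ω = Aut(T)` of automorphisms of the infinite rooted binary tree,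
realized as the subgroup of permutations of the vertex set preserving length
(levels) and the parent relation. -/
def OmegaSG : Subgroup (Equiv.Perm Wd) where
  carrier := {σ | (∀ w, (σ w).length = w.length) ∧ ∀ w, (σ w).dropLast = σ w.dropLast}
  one_mem' := ⟨fun _ => rfl, fun _ => rfl⟩
  mul_mem' := by
    rintro σ τ ⟨hσl, hσd⟩ ⟨hτl, hτd⟩
    refine ⟨fun w => ?_, fun w => ?_⟩
    · simp [Equiv.Perm.mul_apply, hσl, hτl]
    · simp [Equiv.Perm.mul_apply, hσd, hτd]
  inv_mem' := by
    rintro σ ⟨hl, hd⟩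
    refine ⟨fun w => ?_, fun w => ?_⟩
    · have := hl (σ⁻¹ w)
      rw [show σ (σ⁻¹ w) = w from σ.apply_symm_apply w] at this
      exact this.symm
    · apply σ.injective
      have := hd (σ⁻¹ w)
      rw [show σ (σ⁻¹ w) = w from σ.apply_symm_apply w] at this
      rw [← this]
      simp

/-- The section pairing: `(u,v)` acts as `u` on the subtree rooted at `false`
and as `v` on the subtree rooted at `true`. -/
def pairFun (f g : Wd → Wd) : Wd → Wd
  | [] => []
  | false :: w => false :: f w
  | true :: w => true :: g w

@[simp] lemma pairFun_nil (f g : Wd → Wd) : pairFun f g [] = [] := rfl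
@[simp] lemma pairFun_false (f g : Wd → Wd) (w : Wd) :
    pairFun f g (false :: w) = false :: f w := rfl
@[simp] lemma pairFun_true (f g : Wd → Wd) (w : Wd) :
    pairFun f g (true :: w) = true :: g w := rfl

lemma pairFun_comp (f g f' g' : Wd → Wd) (hf : ∀ w, f (f' w) = w) (hg : ∀ w, g (g' w) = w) :
    ∀ w, pairFun f g (pairFun f' g' w) = w := by
  rintro (_ | ⟨(_|_), w⟩) <;> simp [hf, hg]

/-- The permutation `(u,v)` of the tree. -/
def pairPerm (u v : Equiv.Perm Wd) : Equiv.Perm Wd where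
  toFun := pairFun u v
  invFun := pairFun u.symm v.symm
  left_inv := pairFun_comp _ _ _ _ (fun w => u.symm_apply_apply w) (fun w => v.symm_apply_apply w)
  right_inv := pairFun_comp _ _ _ _ (fun w => u.apply_symm_apply w) (fun w => v.apply_symm_apply w)

@[simp] lemma pairPerm_apply (u v : Equiv.Perm Wd) (w : Wd) :
    pairPerm u v w = pairFun u v w := rfl

/-- The first-level swap `σ`. -/
def swapPerm : Equiv.Perm Wd where
  toFun w := match w with | [] => [] | b :: w => (!b) :: w
  invFun w := match w with | [] => [] | b :: w => (!b) :: w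
  left_inv := by rintro (_ | ⟨b, w⟩) <;> simp
  right_inv := by rintro (_ | ⟨b, w⟩) <;> simp

@[simp] lemma swapPerm_nil : swapPerm [] = [] := rfl
@[simp] lemma swapPerm_cons (b : Bool) (w : Wd) : swapPerm (b :: w) = (!b) :: w := rfl

lemma swapPerm_mem : swapPerm ∈ OmegaSG := by
  constructor
  · rintro (_ | ⟨b, w⟩) <;> simp
  · rintro (_ | ⟨b, w⟩)
    · simp
    · rcases eq_or_ne w [] with rfl | hw
      · simp
      · simp only [swapPerm_cons, List.dropLast_cons_of_ne_nil hw]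

lemma mem_omega_length {u : Equiv.Perm Wd} (hu : u ∈ OmegaSG) (w : Wd) :
    (u w).length = w.length := hu.1 w

lemma mem_omega_ne_nil {u : Equiv.Perm Wd} (hu : u ∈ OmegaSG) {w : Wd} (hw : w ≠ []) :
    u w ≠ [] := by
  intro h
  exact hw (List.eq_nil_of_length_eq_zero (by rw [← hu.1 w, h]; rfl))

lemma mem_omega_nil {u : Equiv.Perm Wd} (hu : u ∈ OmegaSG) : u [] = [] :=
  List.eq_nil_of_length_eq_zero (hu.1 [])

lemma pairPerm_mem {u v : Equiv.Perm Wd} (hu : u ∈ OmegaSG) (hv : v ∈ OmegaSG) :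
    pairPerm u v ∈ OmegaSG := by
  constructor
  · rintro (_ | ⟨(_|_), w⟩) <;> simp [hu.1, hv.1]
  · rintro (_ | ⟨(_|_), w⟩)
    · simp
    · rcases eq_or_ne w [] with rfl | hw
      · simp [mem_omega_nil hu]
      · simp only [pairPerm_apply, pairFun_false, List.dropLast_cons_of_ne_nil hw,
          List.dropLast_cons_of_ne_nil (mem_omega_ne_nil hu hw)]
        rw [hu.2]
    · rcases eq_or_ne w [] with rfl | hw
      · simp [mem_omega_nil hv]
      · simp only [pairPerm_apply, pairFun_true, List.dropLast_cons_of_ne_nil hw,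
          List.dropLast_cons_of_ne_nil (mem_omega_ne_nil hv hw)]
        rw [hv.2]

/-- `(u,v)` as an element of `Ω`. -/
def pairOm (u v : OmegaSG) : OmegaSG := ⟨pairPerm u.1 v.1, pairPerm_mem u.2 v.2⟩

/-- `σ` as an element of `Ω`. -/
def swapOm : OmegaSG := ⟨swapPerm, swapPerm_mem⟩

/-! ### Levels, restriction, sign, odometers -/

/-- Level `n` of the tree: words of length `n`. -/
abbrev Lv (n : ℕ) := {w : Wd // w.length = n}

instance fintypeLv (n : ℕ) : Fintype (Lv n) := by
  apply Fintype.ofSurjective (fun g : Fin n → Bool => (⟨List.ofFn g, List.length_ofFn (f := g)⟩ : Lv n))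
  rintro ⟨w, rfl⟩
  exact ⟨w.get, Subtype.ext (List.ofFn_get w)⟩

/-- The permutation induced by `g ∈ Ω` on level `n`. -/
def levelPerm (n : ℕ) (g : OmegaSG) : Equiv.Perm (Lv n) where
  toFun w := ⟨g.1 w.1, by rw [mem_omega_length g.2, w.2]⟩
  invFun w := ⟨(g⁻¹ : OmegaSG).1 w.1, by rw [mem_omega_length (g⁻¹ : OmegaSG).2, w.2]⟩
  left_inv w := Subtype.ext (by simp)
  right_inv w := Subtype.ext (by simp)

/-- Restriction to level `n` as a group homomorphism. -/
def levelHom (n : ℕ) : OmegaSG →* Equiv.Perm (Lv n) where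
  toFun := levelPerm n
  map_one' := Equiv.ext fun w => Subtype.ext rfl
  map_mul' g h := Equiv.ext fun w => Subtype.ext rfl

/-- `sgn_n`: the sign of the permutation induced on level `n`. -/
noncomputable def sgn (n : ℕ) (g : OmegaSG) : ℤˣ := Equiv.Perm.sign (levelPerm n g)

/-- An odometer: an element acting transitively on every level of the tree. -/
def IsOdometer (g : OmegaSG) : Prop :=
  ∀ n : ℕ, ∀ v w : Lv n, ∃ k : ℤ, ((g ^ k : OmegaSG) : Equiv.Perm Wd) v.1 = w.1

/-! ### The profinite topology on `Aut(T)` -/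

instance : TopologicalSpace Wd := ⊥
instance : DiscreteTopology Wd := ⟨rfl⟩
instance : TopologicalSpace (Equiv.Perm Wd) :=
  TopologicalSpace.induced (fun g => (g : Wd → Wd)) Pi.topologicalSpace

lemma continuous_permCoe : Continuous (fun g : Equiv.Perm Wd => (g : Wd → Wd)) :=
  continuous_induced_dom

lemma continuous_permApply (w : Wd) : Continuous fun g : Equiv.Perm Wd => g w :=
  (continuous_apply w).comp continuous_permCoe

instance : IsTopologicalGroup (Equiv.Perm Wd) where
  continuous_mul := by
    apply continuous_induced_rng.2
    apply continuous_pi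
    intro w
    rw [continuous_discrete_rng]
    intro y
    have h : (fun p : Equiv.Perm Wd × Equiv.Perm Wd => ((p.1 * p.2 : Equiv.Perm Wd) : Wd → Wd) w) ⁻¹' {y}
        = ⋃ x : Wd, {p : Equiv.Perm Wd × Equiv.Perm Wd | p.2 w = x} ∩ {p | p.1 x = y} := by
      ext p
      simp only [Set.mem_preimage, Set.mem_singleton_iff, Set.mem_iUnion, Set.mem_inter_iff,
        Set.mem_setOf_eq, Equiv.Perm.mul_apply]
      constructor
      · intro hh; exact ⟨p.2 w, rfl, hh⟩
      · rintro ⟨x, rfl, hh⟩; exact hh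
    show IsOpen ((fun p : Equiv.Perm Wd × Equiv.Perm Wd =>
      ((p.1 * p.2 : Equiv.Perm Wd) : Wd → Wd) w) ⁻¹' {y})
    rw [h]
    refine isOpen_iUnion fun x => IsOpen.inter ?_ ?_
    · exact IsOpen.preimage ((continuous_permApply w).comp continuous_snd) (isOpen_discrete {x})
    · exact IsOpen.preimage ((continuous_permApply x).comp continuous_fst) (isOpen_discrete {y})
  continuous_inv := by
    apply continuous_induced_rng.2
    apply continuous_pi
    intro w
    rw [continuous_discrete_rng]
    intro y
    have h : (fun g : Equiv.Perm Wd => ((g⁻¹ : Equiv.Perm Wd) : Wd → Wd) w) ⁻¹' {y}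
        = {g : Equiv.Perm Wd | g y = w} := by
      ext g
      simp only [Set.mem_preimage, Set.mem_singleton_iff, Set.mem_setOf_eq]
      constructor
      · rintro rfl; simp
      · intro hh; rw [← hh]; simp
    show IsOpen ((fun g : Equiv.Perm Wd => ((g⁻¹ : Equiv.Perm Wd) : Wd → Wd) w) ⁻¹' {y})
    rw [h]
    exact IsOpen.preimage (continuous_permApply y) (isOpen_discrete {w})

/-! ### The recursive generators `a₁ = σ`, `a₂ = (a₃⁻¹, a₂⁻¹)σ`, `a₃ = (a₂, a₃)` -/

mutual
  /-- The underlying function of `a₂`. -/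
  def pA : Wd → Wd
    | [] => []
    | false :: w => true :: piA w
    | true :: w => false :: qiA w
  /-- The underlying function of `a₃`. -/
  def qA : Wd → Wd
    | [] => []
    | false :: w => false :: pA w
    | true :: w => true :: qA w
  /-- The underlying function of `a₂⁻¹`. -/
  def piA : Wd → Wd
    | [] => []
    | false :: w => true :: qA w
    | true :: w => false :: pA w
  /-- The underlying function of `a₃⁻¹`. -/
  def qiA : Wd → Wd
    | [] => []
    | false :: w => false :: piA w
    | true :: w => true :: qiA w
end

lemma a_inv_lemma : ∀ w : Wd, pA (piA w) = w ∧ piA (pA w) = w ∧ qA (qiA w) = w ∧ qiA (qA w) = w := by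
  intro w
  induction w with
  | nil => simp [pA, qA, piA, qiA]
  | cons b w ih =>
    cases b <;>
      simp [pA, qA, piA, qiA, ih.1, ih.2.1, ih.2.2.1, ih.2.2.2]

/-- The generator `a₂`. -/
def a2 : Equiv.Perm Wd where
  toFun := pA
  invFun := piA
  left_inv w := (a_inv_lemma w).2.1
  right_inv w := (a_inv_lemma w).1

/-- The generator `a₃`. -/
def a3 : Equiv.Perm Wd where
  toFun := qA
  invFun := qiA
  left_inv w := (a_inv_lemma w).2.2.2
  right_inv w := (a_inv_lemma w).2.2.1

lemma a_length_lemma : ∀ w : Wd, (pA w).length = w.length ∧ (qA w).length = w.length ∧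
    (piA w).length = w.length ∧ (qiA w).length = w.length := by
  intro w
  induction w with
  | nil => simp [pA, qA, piA, qiA]
  | cons b w ih =>
    cases b <;>
      simp [pA, qA, piA, qiA, ih.1, ih.2.1, ih.2.2.1, ih.2.2.2]

lemma a_ne_nil {f : Wd → Wd} (hf : ∀ w : Wd, (f w).length = w.length) {w : Wd} (hw : w ≠ []) :
    f w ≠ [] := by
  intro h
  exact hw (List.eq_nil_of_length_eq_zero (by rw [← hf w, h]; rfl))

lemma a_dropLast_lemma : ∀ w : Wd, (pA w).dropLast = pA w.dropLast ∧
    (qA w).dropLast = qA w.dropLast ∧ (piA w).dropLast = piA w.dropLast ∧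
    (qiA w).dropLast = qiA w.dropLast := by
  intro w
  induction w with
  | nil => simp [pA, qA, piA, qiA]
  | cons b w ih =>
    rcases eq_or_ne w [] with rfl | hw
    · cases b <;> simp [pA, qA, piA, qiA]
    · have hp := a_ne_nil (fun w => (a_length_lemma w).1) hw
      have hq := a_ne_nil (fun w => (a_length_lemma w).2.1) hw
      have hpi := a_ne_nil (fun w => (a_length_lemma w).2.2.1) hw
      have hqi := a_ne_nil (fun w => (a_length_lemma w).2.2.2) hw
      cases b <;>
        simp [pA, qA, piA, qiA, List.dropLast_cons_of_ne_nil hw,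
          List.dropLast_cons_of_ne_nil hp, List.dropLast_cons_of_ne_nil hq,
          List.dropLast_cons_of_ne_nil hpi, List.dropLast_cons_of_ne_nil hqi,
          ih.1, ih.2.1, ih.2.2.1, ih.2.2.2]

lemma a2_mem : a2 ∈ OmegaSG :=
  ⟨fun w => (a_length_lemma w).1, fun w => (a_dropLast_lemma w).1⟩

lemma a3_mem : a3 ∈ OmegaSG :=
  ⟨fun w => (a_length_lemma w).2.1, fun w => (a_dropLast_lemma w).2.1⟩

/-- `a₁ = σ` as an element of `Ω`. -/
def A1 : OmegaSG := swapOm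
/-- `a₂` as an element of `Ω`. -/
def A2 : OmegaSG := ⟨a2, a2_mem⟩
/-- `a₃` as an element of `Ω`. -/
def A3 : OmegaSG := ⟨a3, a3_mem⟩

/-- `G = ⟨⟨a₁, a₃⟩⟩`, the topological closure of the subgroup generated by `a₁` and `a₃`:
a model of the geometric iterated monodromy group of `f(x) = 2/(x-1)²`. -/
noncomputable def Ggrp : Subgroup OmegaSG :=
  (Subgroup.closure {A1, A3}).topologicalClosure

/-- The normal closure in `G` of the closed subgroup generated by an element `c`:
the closed subgroup generated by all `G`-conjugates of `c`. -/
noncomputable def nclG (c : OmegaSG) : Subgroup OmegaSG :=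
  (Subgroup.closure {x | ∃ g ∈ Ggrp, x = g * c * g⁻¹}).topologicalClosure

/-- `U`, the normal closure in `G` of `⟨⟨a₂a₃⁻¹⟩⟩`. -/
noncomputable def Ugrp : Subgroup OmegaSG := nclG (A2 * A3⁻¹)

/-- `H₁`, the normal closure in `G` of `⟨⟨a₁⟩⟩`. -/
noncomputable def H1grp : Subgroup OmegaSG := nclG A1

/-- `H₃`, the normal closure in `G` of `⟨⟨a₃⟩⟩`. -/
noncomputable def H3grp : Subgroup OmegaSG := nclG A3


/-! ### Auxiliary: pair calculus -/

section PairCalc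

lemma omega_ext {u v : OmegaSG} (h : ∀ w : Wd, (u : Equiv.Perm Wd) w = (v : Equiv.Perm Wd) w) :
    u = v := Subtype.ext (Equiv.ext h)

@[simp] lemma coe_mul_apply (u v : OmegaSG) (w : Wd) :
    ((u * v : OmegaSG) : Equiv.Perm Wd) w = (u : Equiv.Perm Wd) ((v : Equiv.Perm Wd) w) := rfl

@[simp] lemma coe_inv_apply (u : OmegaSG) (w : Wd) :
    ((u⁻¹ : OmegaSG) : Equiv.Perm Wd) w = (u : Equiv.Perm Wd).symm w := rfl

lemma pairOm_mul (u v u' v' : OmegaSG) :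
    pairOm u v * pairOm u' v' = pairOm (u * u') (v * v') := by
  apply omega_ext
  rintro (_ | ⟨(_|_), w⟩) <;> rfl

lemma pairOm_one : pairOm 1 1 = (1 : OmegaSG) := by
  apply omega_ext
  rintro (_ | ⟨(_|_), w⟩) <;> rfl

lemma pairOm_inv (u v : OmegaSG) : (pairOm u v)⁻¹ = pairOm u⁻¹ v⁻¹ := by
  rw [inv_eq_iff_mul_eq_one, pairOm_mul, mul_inv_cancel, mul_inv_cancel, pairOm_one]

lemma swap_mul_pairOm (u v : OmegaSG) : A1 * pairOm u v = pairOm v u * A1 := by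
  apply omega_ext
  rintro (_ | ⟨(_|_), w⟩) <;> rfl

lemma A1_sq : A1 * A1 = 1 := by
  apply omega_ext
  rintro (_ | ⟨(_|_), w⟩) <;> rfl

lemma A1_inv : A1⁻¹ = A1 := by
  rw [inv_eq_iff_mul_eq_one, A1_sq]

lemma pairOm_inj_left {u v u' v' : OmegaSG} (h : pairOm u v = pairOm u' v') : u = u' := by
  apply omega_ext
  intro w
  have := congrArg (fun z : OmegaSG => (z : Equiv.Perm Wd) (false :: w)) h
  simpa [pairOm, pairPerm] using this

lemma A3_pair : A3 = pairOm A2 A3 := by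
  apply omega_ext
  rintro (_ | ⟨(_|_), w⟩) <;> rfl

lemma A2_pair : A2 = pairOm A3⁻¹ A2⁻¹ * A1 := by
  apply omega_ext
  rintro (_ | ⟨(_|_), w⟩) <;> rfl

lemma A2_mul_A3 : A2 * A3 = A1 := by
  apply omega_ext
  rintro (_ | ⟨(_|_), w⟩)
  · rfl
  · show pA (qA (false :: w)) = _
    show (true : Bool) :: piA (pA w) = _
    rw [(a_inv_lemma w).2.1]; rfl
  · show pA (qA (true :: w)) = _
    show (false : Bool) :: qiA (qA w) = _
    rw [(a_inv_lemma w).2.2.2]; rfl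

lemma A2_eq : A2 = A1 * A3⁻¹ := by
  rw [← A2_mul_A3, mul_assoc, mul_inv_cancel, mul_one]

lemma A3A2_sq : (A3 * A2) * (A3 * A2) = 1 := by
  calc (A3 * A2) * (A3 * A2) = A3 * (A2 * A3) * A2 := by group
    _ = A3 * A1 * (A1 * A3⁻¹) := by rw [A2_mul_A3, A2_eq]
    _ = A3 * (A1 * A1) * A3⁻¹ := by group
    _ = 1 := by rw [A1_sq, mul_one, mul_inv_cancel]

lemma A2_pow4 : A2 * A2 * A2 * A2 = 1 := by
  have hsq : A2 * A2 = pairOm (A3⁻¹ * A2⁻¹) (A2⁻¹ * A3⁻¹) := by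
    conv_lhs => rw [A2_pair]
    calc pairOm A3⁻¹ A2⁻¹ * A1 * (pairOm A3⁻¹ A2⁻¹ * A1)
        = pairOm A3⁻¹ A2⁻¹ * (A1 * pairOm A3⁻¹ A2⁻¹) * A1 := by group
      _ = pairOm A3⁻¹ A2⁻¹ * (pairOm A2⁻¹ A3⁻¹ * A1) * A1 := by rw [swap_mul_pairOm]
      _ = pairOm A3⁻¹ A2⁻¹ * pairOm A2⁻¹ A3⁻¹ * (A1 * A1) := by group
      _ = _ := by rw [A1_sq, mul_one, pairOm_mul]
  have h1 : (A3⁻¹ * A2⁻¹) * (A3⁻¹ * A2⁻¹) = 1 := by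
    have : (A2 * A3) * (A2 * A3) = 1 := by rw [A2_mul_A3, A1_sq]
    calc (A3⁻¹ * A2⁻¹) * (A3⁻¹ * A2⁻¹) = ((A2 * A3) * (A2 * A3))⁻¹ := by group
      _ = 1 := by rw [this, inv_one]
  have h2 : (A2⁻¹ * A3⁻¹) * (A2⁻¹ * A3⁻¹) = 1 := by
    calc (A2⁻¹ * A3⁻¹) * (A2⁻¹ * A3⁻¹) = ((A3 * A2) * (A3 * A2))⁻¹ := by group
      _ = 1 := by rw [A3A2_sq, inv_one]
  calc A2 * A2 * A2 * A2 = (A2 * A2) * (A2 * A2) := by group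
    _ = pairOm (A3⁻¹ * A2⁻¹) (A2⁻¹ * A3⁻¹) * pairOm (A3⁻¹ * A2⁻¹) (A2⁻¹ * A3⁻¹) := by rw [hsq]
    _ = pairOm 1 1 := by rw [pairOm_mul, h1, h2]
    _ = 1 := pairOm_one

lemma A3_pow4 : A3 * A3 * A3 * A3 = 1 := by
  have hp : ∀ w : Wd, pA (pA (pA (pA w))) = w := by
    intro w
    have := congrArg (fun z : OmegaSG => (z : Equiv.Perm Wd) w) A2_pow4
    exact this
  have hq : ∀ w : Wd, qA (qA (qA (qA w))) = w := by
    intro w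
    induction w with
    | nil => rfl
    | cons b w ih =>
      cases b
      · show qA (qA (qA ((false : Bool) :: pA w))) = _
        show (false : Bool) :: pA (pA (pA (pA w))) = _
        rw [hp]
      · show (true : Bool) :: qA (qA (qA (qA w))) = _
        rw [ih]
  apply omega_ext
  intro w
  exact hq w

end PairCalc

/-! ### The elements `γ₁, γ₂` and their relations -/

section Gamma

/-- `γ₁ = a₂a₃⁻¹`. -/
def g1 : OmegaSG := A2 * A3⁻¹
/-- `γ₂ = a₃⁻¹a₂`. -/
def g2 : OmegaSG := A3⁻¹ * A2

lemma A1_pair_A1 (u v : OmegaSG) : A1 * pairOm u v * A1 = pairOm v u := by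
  rw [swap_mul_pairOm, mul_assoc, A1_sq, mul_one]

lemma A2A3_inv : A2 * A3 = A3⁻¹ * A2⁻¹ := by
  have h : (A2 * A3) * (A2 * A3) = 1 := by rw [A2_mul_A3, A1_sq]
  calc A2 * A3 = ((A2 * A3) * (A2 * A3)) * A3⁻¹ * A2⁻¹ := by group
    _ = A3⁻¹ * A2⁻¹ := by rw [h]; group

lemma rel_xyx : A2 * A3 * A2 = A3⁻¹ := by
  calc A2 * A3 * A2 = (A3⁻¹ * A2⁻¹) * A2 := by rw [A2A3_inv]
    _ = A3⁻¹ := by group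

lemma rel_yxy : A3 * A2 * A3 = A2⁻¹ := by
  calc A3 * A2 * A3 = ((A3 * A2) * (A3 * A2)) * A2⁻¹ := by group
    _ = A2⁻¹ := by rw [A3A2_sq]; group

lemma A2_cube : A2⁻¹ = A2 * A2 * A2 := by
  have h : A2 * (A2 * A2 * A2) = 1 := by rw [← A2_pow4]; group
  exact inv_eq_of_mul_eq_one_right h

lemma A3_cube : A3⁻¹ = A3 * A3 * A3 := by
  have h : A3 * (A3 * A3 * A3) = 1 := by rw [← A3_pow4]; group
  exact inv_eq_of_mul_eq_one_right h

lemma A3_inv_cube : A3⁻¹ * A3⁻¹ * A3⁻¹ = A3 := by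
  have : (A3 * A3 * A3)⁻¹ = A3⁻¹ * A3⁻¹ * A3⁻¹ := by group
  rw [← this, ← A3_cube, inv_inv]

lemma A2_inv_cube : A2⁻¹ * A2⁻¹ * A2⁻¹ = A2 := by
  have : (A2 * A2 * A2)⁻¹ = A2⁻¹ * A2⁻¹ * A2⁻¹ := by group
  rw [← this, ← A2_cube, inv_inv]

lemma g1_pair : g1 = pairOm (A3⁻¹ * A3⁻¹) (A2⁻¹ * A2⁻¹) * A1 := by
  have hA3i : (A3 : OmegaSG)⁻¹ = pairOm A2⁻¹ A3⁻¹ := by rw [← pairOm_inv, ← A3_pair]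
  calc g1 = A2 * A3⁻¹ := rfl
    _ = (pairOm A3⁻¹ A2⁻¹ * A1) * pairOm A2⁻¹ A3⁻¹ := by rw [← A2_pair, ← hA3i]
    _ = pairOm A3⁻¹ A2⁻¹ * (A1 * pairOm A2⁻¹ A3⁻¹ * A1) * A1 := by
        rw [show pairOm A3⁻¹ A2⁻¹ * (A1 * pairOm A2⁻¹ A3⁻¹ * A1) * A1
            = pairOm A3⁻¹ A2⁻¹ * A1 * pairOm A2⁻¹ A3⁻¹ * (A1 * A1) from by group, A1_sq, mul_one]
    _ = pairOm A3⁻¹ A2⁻¹ * pairOm A3⁻¹ A2⁻¹ * A1 := by rw [A1_pair_A1]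
    _ = _ := by rw [pairOm_mul]

lemma g2_pair : g2 = pairOm (A2⁻¹ * A3⁻¹) (A3⁻¹ * A2⁻¹) * A1 := by
  have hA3i : (A3 : OmegaSG)⁻¹ = pairOm A2⁻¹ A3⁻¹ := by rw [← pairOm_inv, ← A3_pair]
  calc g2 = A3⁻¹ * A2 := rfl
    _ = pairOm A2⁻¹ A3⁻¹ * (pairOm A3⁻¹ A2⁻¹ * A1) := by rw [← A2_pair, ← hA3i]
    _ = _ := by rw [← mul_assoc, pairOm_mul]

lemma pair_A1_mul (a b c d : OmegaSG) :
    (pairOm a b * A1) * (pairOm c d * A1) = pairOm (a * d) (b * c) := by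
  calc (pairOm a b * A1) * (pairOm c d * A1)
      = pairOm a b * (A1 * pairOm c d * A1) := by group
    _ = pairOm a b * pairOm d c := by rw [A1_pair_A1]
    _ = _ := by rw [pairOm_mul]

lemma g1g2_comm : g1 * g2 = g2 * g1 := by
  have hA3A2 : A3 * A2 = A2⁻¹ * A3⁻¹ := by
    calc A3 * A2 = (A3 * A2 * A3) * A3⁻¹ := by group
      _ = A2⁻¹ * A3⁻¹ := by rw [rel_yxy]
  have E1 : A3⁻¹ * A3⁻¹ * (A3⁻¹ * A2⁻¹) = A2⁻¹ * A3⁻¹ * (A2⁻¹ * A2⁻¹) := by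
    have E1inv : A2 * A3 * (A3 * A3) = A2 * A2 * (A3 * A2) := by
      calc A2 * A3 * (A3 * A3) = A2 * (A3 * A3 * A3) := by group
        _ = A2 * A3⁻¹ := by rw [← A3_cube]
        _ = A2 * A2 * (A2⁻¹ * A3⁻¹) := by group
        _ = A2 * A2 * (A3 * A2) := by rw [← hA3A2]
    calc A3⁻¹ * A3⁻¹ * (A3⁻¹ * A2⁻¹) = (A2 * A3 * (A3 * A3))⁻¹ := by group
      _ = (A2 * A2 * (A3 * A2))⁻¹ := by rw [E1inv]
      _ = _ := by group
  have E2 : A2⁻¹ * A2⁻¹ * (A2⁻¹ * A3⁻¹) = A3⁻¹ * A2⁻¹ * (A3⁻¹ * A3⁻¹) := by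
    have E2inv : A3 * A2 * (A2 * A2) = A3 * A3 * (A2 * A3) := by
      calc A3 * A2 * (A2 * A2) = A3 * (A2 * A2 * A2) := by group
        _ = A3 * A2⁻¹ := by rw [← A2_cube]
        _ = A3 * (A3 * A3⁻¹) * A2⁻¹ := by group
        _ = A3 * A3 * (A3⁻¹ * A2⁻¹) := by group
        _ = A3 * A3 * (A2 * A3) := by rw [← A2A3_inv]
    calc A2⁻¹ * A2⁻¹ * (A2⁻¹ * A3⁻¹) = (A3 * A2 * (A2 * A2))⁻¹ := by group
      _ = (A3 * A3 * (A2 * A3))⁻¹ := by rw [E2inv]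
      _ = _ := by group
  rw [g1_pair, g2_pair, pair_A1_mul, pair_A1_mul, E1, E2]

lemma conj_A3_g1 : A3⁻¹ * g1 * A3 = g2 := by
  show A3⁻¹ * (A2 * A3⁻¹) * A3 = A3⁻¹ * A2
  group

lemma conj_A3_g2 : A3⁻¹ * g2 * A3 = g1⁻¹ := by
  show A3⁻¹ * (A3⁻¹ * A2) * A3 = (A2 * A3⁻¹)⁻¹
  calc A3⁻¹ * (A3⁻¹ * A2) * A3 = A3⁻¹ * A3⁻¹ * (A2 * A3) := by group
    _ = A3⁻¹ * A3⁻¹ * (A3⁻¹ * A2⁻¹) := by rw [A2A3_inv]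
    _ = (A3⁻¹ * A3⁻¹ * A3⁻¹) * A2⁻¹ := by group
    _ = A3 * A2⁻¹ := by rw [A3_inv_cube]
    _ = (A2 * A3⁻¹)⁻¹ := by group

lemma conj_A1_g1 : A1 * g1 * A1 = g1⁻¹ := by
  show A1 * (A2 * A3⁻¹) * A1 = (A2 * A3⁻¹)⁻¹
  calc A1 * (A2 * A3⁻¹) * A1 = (A2 * A3) * (A2 * A3⁻¹) * (A2 * A3) := by rw [A2_mul_A3]
    _ = (A2 * A3) * A2 * A3⁻¹ * (A2 * A3) := by group
    _ = (A2 * A3 * A2) * (A3⁻¹ * A2 * A3) := by group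
    _ = A3⁻¹ * (A3⁻¹ * A2 * A3) := by rw [rel_xyx]
    _ = A3⁻¹ * A3⁻¹ * (A2 * A3) := by group
    _ = A3⁻¹ * A3⁻¹ * (A3⁻¹ * A2⁻¹) := by rw [A2A3_inv]
    _ = (A3⁻¹ * A3⁻¹ * A3⁻¹) * A2⁻¹ := by group
    _ = A3 * A2⁻¹ := by rw [A3_inv_cube]
    _ = (A2 * A3⁻¹)⁻¹ := by group

lemma conj_A1_g2 : A1 * g2 * A1 = g2⁻¹ := by
  show A1 * (A3⁻¹ * A2) * A1 = (A3⁻¹ * A2)⁻¹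
  calc A1 * (A3⁻¹ * A2) * A1 = (A2 * A3) * (A3⁻¹ * A2) * (A2 * A3) := by rw [A2_mul_A3]
    _ = (A2 * A3) * A3⁻¹ * A2 * (A2 * A3) := by group
    _ = (A2 * A2 * A2) * A3 := by group
    _ = A2⁻¹ * A3 := by rw [← A2_cube]
    _ = (A3⁻¹ * A2)⁻¹ := by group

lemma beta1_pair : A1 * A3 * A1 * A3⁻¹ = pairOm g1⁻¹ g1 := by
  have hA3i : (A3 : OmegaSG)⁻¹ = pairOm A2⁻¹ A3⁻¹ := by rw [← pairOm_inv, ← A3_pair]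
  have hg1i : g1⁻¹ = A3 * A2⁻¹ := by show (A2 * A3⁻¹)⁻¹ = _; group
  calc A1 * A3 * A1 * A3⁻¹ = A1 * pairOm A2 A3 * A1 * pairOm A2⁻¹ A3⁻¹ := by
        rw [← A3_pair, ← hA3i]
    _ = (A1 * pairOm A2 A3 * A1) * pairOm A2⁻¹ A3⁻¹ := by group
    _ = pairOm A3 A2 * pairOm A2⁻¹ A3⁻¹ := by rw [A1_pair_A1]
    _ = pairOm (A3 * A2⁻¹) (A2 * A3⁻¹) := by rw [pairOm_mul]
    _ = pairOm g1⁻¹ g1 := by rw [hg1i]; rfl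

lemma beta2_pair : A3⁻¹ * A1 * A3 * A1 = pairOm g2⁻¹ g2 := by
  have hA3i : (A3 : OmegaSG)⁻¹ = pairOm A2⁻¹ A3⁻¹ := by rw [← pairOm_inv, ← A3_pair]
  have hg2i : g2⁻¹ = A2⁻¹ * A3 := by show (A3⁻¹ * A2)⁻¹ = _; group
  calc A3⁻¹ * A1 * A3 * A1 = pairOm A2⁻¹ A3⁻¹ * A1 * pairOm A2 A3 * A1 := by
        rw [← A3_pair, ← hA3i]
    _ = pairOm A2⁻¹ A3⁻¹ * (A1 * pairOm A2 A3 * A1) := by group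
    _ = pairOm A2⁻¹ A3⁻¹ * pairOm A3 A2 := by rw [A1_pair_A1]
    _ = pairOm (A2⁻¹ * A3) (A3⁻¹ * A2) := by rw [pairOm_mul]
    _ = pairOm g2⁻¹ g2 := by rw [hg2i]; rfl

lemma A3_eq_A2_g2inv : A3 = A2 * g2⁻¹ := by
  show A3 = A2 * (A3⁻¹ * A2)⁻¹
  group

lemma A3inv_eq_A2inv_g1 : A3⁻¹ = A2⁻¹ * g1 := by
  show A3⁻¹ = A2⁻¹ * (A2 * A3⁻¹)
  group

end Gamma

/-! ### Topological facts: `Ω` is compact Hausdorff -/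

section Topology

open Topology

lemma inducing_permCoe : IsInducing (fun g : Equiv.Perm Wd => (g : Wd → Wd)) := ⟨rfl⟩

lemma embedding_permCoe : IsEmbedding (fun g : Equiv.Perm Wd => (g : Wd → Wd)) :=
  ⟨inducing_permCoe, fun _ _ h => Equiv.coe_fn_injective h⟩

instance : T2Space (Equiv.Perm Wd) := embedding_permCoe.t2Space

/-- The evaluation map from `Ω` to functions. -/
def theta (g : OmegaSG) : Wd → Wd := ((g : Equiv.Perm Wd) : Wd → Wd)

lemma inducing_theta : IsInducing theta :=
  inducing_permCoe.comp IsInducing.subtypeVal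

lemma continuous_omApply (w : Wd) : Continuous (fun g : OmegaSG => (g : Equiv.Perm Wd) w) :=
  (continuous_permApply w).comp continuous_subtype_val

/-- The set of functions corresponding to tree automorphisms. -/
def Fset : Set (Wd → Wd) :=
  {f | (∀ w, (f w).length = w.length) ∧ (∀ w, (f w).dropLast = f w.dropLast) ∧
    Function.Injective f}

lemma range_theta : Set.range theta = Fset := by
  apply Set.Subset.antisymm
  · rintro _ ⟨g, rfl⟩
    exact ⟨fun w => mem_omega_length g.2 w, fun w => g.2.2 w,
      fun a b hab => (g : Equiv.Perm Wd).injective hab⟩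
  · rintro f ⟨hlen, hdrop, hinj⟩
    have hsurj : Function.Surjective f := by
      intro v
      have hres : Function.Injective (fun w : Lv v.length => (⟨f w.1, by rw [hlen, w.2]⟩ : Lv v.length)) := by
        intro a b hab
        exact Subtype.ext (hinj (congrArg Subtype.val hab))
      obtain ⟨w, hw⟩ := (Finite.injective_iff_surjective.mp hres) ⟨v, rfl⟩
      exact ⟨w.1, congrArg Subtype.val hw⟩
    refine ⟨⟨Equiv.ofBijective f ⟨hinj, hsurj⟩, ⟨fun w => hlen w, fun w => hdrop w⟩⟩, rfl⟩

lemma finite_lv_set (n : ℕ) : ({v : Wd | v.length = n}).Finite := by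
  haveI : Finite (Lv n) := Finite.of_fintype _
  exact Set.Finite.ofFinset ((fintypeLv n).elems.image Subtype.val) (by
    intro v
    simp only [Finset.mem_image, Set.mem_setOf_eq]
    constructor
    · rintro ⟨⟨w, hw⟩, _, rfl⟩; exact hw
    · intro hv; exact ⟨⟨v, hv⟩, (fintypeLv n).complete _, rfl⟩)

lemma isCompact_Fset : IsCompact Fset := by
  have h1 : IsCompact {f : Wd → Wd | ∀ w, (f w).length = w.length} := by
    have he : {f : Wd → Wd | ∀ w, (f w).length = w.length} =
        Set.pi Set.univ (fun w : Wd => {v : Wd | v.length = w.length}) := by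
      ext f; simp [Set.mem_pi]
    rw [he]
    exact isCompact_univ_pi fun w => (finite_lv_set w.length).isCompact
  have h2 : IsClosed {f : Wd → Wd | ∀ w, (f w).dropLast = f w.dropLast} := by
    have he : {f : Wd → Wd | ∀ w, (f w).dropLast = f w.dropLast} =
        ⋂ w : Wd, (fun f : Wd → Wd => ((f w).dropLast, f w.dropLast)) ⁻¹'
          {p : Wd × Wd | p.1 = p.2} := by
      ext f; simp [Set.mem_iInter]
    rw [he]
    refine isClosed_iInter fun w => IsClosed.preimage ?_ (isClosed_discrete _)
    exact Continuous.prodMk (continuous_of_discreteTopology.comp (continuous_apply w))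
      (continuous_apply w.dropLast)
  have h3 : IsClosed {f : Wd → Wd | Function.Injective f} := by
    have he : {f : Wd → Wd | Function.Injective f} =
        ⋂ a : Wd, ⋂ b : Wd, {f : Wd → Wd | f a = f b → a = b} := by
      ext f
      simp only [Set.mem_iInter, Set.mem_setOf_eq]
      exact ⟨fun h a b => fun hab => h hab, fun h a b hab => h a b hab⟩
    rw [he]
    refine isClosed_iInter fun a => isClosed_iInter fun b => ?_
    by_cases hab : a = b
    · subst hab
      have : {f : Wd → Wd | f a = f a → a = a} = Set.univ := by
        ext f; simp
      rw [this]; exact isClosed_univ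
    · have : {f : Wd → Wd | f a = f b → a = b} =
          (fun f : Wd → Wd => (f a, f b)) ⁻¹' {p : Wd × Wd | p.1 = p.2}ᶜ := by
        ext f
        simp only [Set.mem_setOf_eq, Set.mem_preimage, Set.mem_compl_iff]
        exact ⟨fun h hfab => hab (h hfab), fun h hfab => absurd hfab h⟩
      rw [this]
      exact IsClosed.preimage ((continuous_apply a).prodMk (continuous_apply b))
        (isClosed_discrete _)
  have heq : Fset = {f : Wd → Wd | ∀ w, (f w).length = w.length} ∩
      ({f : Wd → Wd | ∀ w, (f w).dropLast = f w.dropLast} ∩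
        {f : Wd → Wd | Function.Injective f}) := by
    rfl
  rw [heq]
  exact h1.inter_right (h2.inter h3)

instance : CompactSpace OmegaSG := by
  rw [← isCompact_univ_iff, inducing_theta.isCompact_iff, Set.image_univ, range_theta]
  exact isCompact_Fset

lemma continuous_psi : Continuous (fun x : OmegaSG => pairOm x x⁻¹) := by
  apply Continuous.subtype_mk
  apply continuous_induced_rng.2
  apply continuous_pi
  rintro (_ | ⟨(_|_), w⟩)
  · exact continuous_const
  · show Continuous fun x : OmegaSG =>
      (false : Bool) :: ((x : Equiv.Perm Wd) w)
    exact continuous_of_discreteTopology.comp (continuous_omApply w)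
  · show Continuous fun x : OmegaSG =>
      (true : Bool) :: (((x⁻¹ : OmegaSG) : Equiv.Perm Wd) w)
    exact continuous_of_discreteTopology.comp ((continuous_omApply w).comp continuous_inv)

lemma continuous_conjBy (c : OmegaSG) : Continuous (fun y : OmegaSG => c * y * c⁻¹) :=
  (continuous_const.mul continuous_id).mul continuous_const

end Topology

/-! ### Closure machinery -/

section ClosureMachinery

lemma A1_mem_G : A1 ∈ Ggrp :=
  Subgroup.le_topologicalClosure _ (Subgroup.subset_closure (by simp))

lemma A3_mem_G : A3 ∈ Ggrp :=
  Subgroup.le_topologicalClosure _ (Subgroup.subset_closure (by simp))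

lemma A2_mem_G : A2 ∈ Ggrp := by
  rw [A2_eq]
  exact mul_mem A1_mem_G (inv_mem A3_mem_G)

lemma Ggrp_le {B : Subgroup OmegaSG} (hB : IsClosed (B : Set OmegaSG))
    (h1 : A1 ∈ B) (h3 : A3 ∈ B) : Ggrp ≤ B := by
  apply Subgroup.topologicalClosure_minimal _ _ hB
  rw [Subgroup.closure_le]
  intro x hx
  simp only [Set.mem_insert_iff, Set.mem_singleton_iff] at hx
  rcases hx with rfl | rfl
  exacts [h1, h3]

lemma nclG_isClosed (c : OmegaSG) : IsClosed ((nclG c : Subgroup OmegaSG) : Set OmegaSG) :=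
  Subgroup.isClosed_topologicalClosure _

lemma mem_nclG_gen (c : OmegaSG) {g : OmegaSG} (hg : g ∈ Ggrp) : g * c * g⁻¹ ∈ nclG c :=
  Subgroup.le_topologicalClosure _ (Subgroup.subset_closure ⟨g, hg, rfl⟩)

lemma mem_nclG_self (c : OmegaSG) : c ∈ nclG c := by
  have := mem_nclG_gen c (one_mem Ggrp)
  simpa using this

lemma nclG_le {c : OmegaSG} {B : Subgroup OmegaSG} (hB : IsClosed (B : Set OmegaSG))
    (h : ∀ g ∈ Ggrp, g * c * g⁻¹ ∈ B) : nclG c ≤ B := by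
  apply Subgroup.topologicalClosure_minimal _ _ hB
  rw [Subgroup.closure_le]
  rintro x ⟨g, hg, rfl⟩
  exact h g hg

lemma nclG_conj_mem (c : OmegaSG) {g x : OmegaSG} (hg : g ∈ Ggrp) (hx : x ∈ nclG c) :
    g * x * g⁻¹ ∈ nclG c := by
  set S : Set OmegaSG := {x | ∃ h ∈ Ggrp, x = h * c * h⁻¹} with hS
  have hmap : ∀ y ∈ Subgroup.closure S, g * y * g⁻¹ ∈ Subgroup.closure S := by
    intro y hy
    have h1 : (MulAut.conj g).toMonoidHom y ∈
        Subgroup.map (MulAut.conj g).toMonoidHom (Subgroup.closure S) :=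
      Subgroup.mem_map_of_mem _ hy
    rw [MonoidHom.map_closure] at h1
    have h2 : (MulAut.conj g).toMonoidHom '' S ⊆ S := by
      rintro _ ⟨z, ⟨h, hh, rfl⟩, rfl⟩
      refine ⟨g * h, mul_mem hg hh, ?_⟩
      show g * (h * c * h⁻¹) * g⁻¹ = g * h * c * (g * h)⁻¹
      group
    have h3 := Subgroup.closure_mono h2 h1
    have h4 : Subgroup.closure ((MulAut.conj g).toMonoidHom '' S) ≤ Subgroup.closure S :=
      Subgroup.closure_mono h2
    have h5 := h4 h1
    simpa [MulAut.conj_apply] using h5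
  have hx' : x ∈ closure ((Subgroup.closure S : Subgroup OmegaSG) : Set OmegaSG) := by
    rw [← Subgroup.topologicalClosure_coe]
    exact hx
  have himg : (fun y : OmegaSG => g * y * g⁻¹) '' closure
      ((Subgroup.closure S : Subgroup OmegaSG) : Set OmegaSG) ⊆
      closure ((Subgroup.closure S : Subgroup OmegaSG) : Set OmegaSG) := by
    refine (image_closure_subset_closure_image (continuous_conjBy g)).trans ?_
    apply closure_mono
    rintro _ ⟨y, hy, rfl⟩
    exact hmap y hy
  have : g * x * g⁻¹ ∈ closure ((Subgroup.closure S : Subgroup OmegaSG) : Set OmegaSG) :=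
    himg ⟨x, hx', rfl⟩
  rw [← Subgroup.topologicalClosure_coe] at this
  exact this

/-- The closed normal closure of the commutator `[a₁,a₃]` in `G`. -/
noncomputable def Ngrp : Subgroup OmegaSG := nclG (A1 * A3 * A1 * A3⁻¹)

lemma beta1_mem_N : A1 * A3 * A1 * A3⁻¹ ∈ Ngrp := mem_nclG_self _

lemma N_isClosed : IsClosed ((Ngrp : Subgroup OmegaSG) : Set OmegaSG) := nclG_isClosed _

lemma N_conj {g x : OmegaSG} (hg : g ∈ Ggrp) (hx : x ∈ Ngrp) : g * x * g⁻¹ ∈ Ngrp :=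
  nclG_conj_mem _ hg hx

/-- Auxiliary subgroup for proving that all commutators lie in `N`. -/
noncomputable def Dgrp : Subgroup OmegaSG where
  carrier := {h | h ∈ Ggrp ∧ A1 * h * A1⁻¹ * h⁻¹ ∈ Ngrp ∧ A3 * h * A3⁻¹ * h⁻¹ ∈ Ngrp}
  one_mem' := by
    refine ⟨one_mem _, ?_, ?_⟩ <;> · simpa using one_mem Ngrp
  mul_mem' := by
    rintro h k ⟨hG, h1, h3⟩ ⟨kG, k1, k3⟩
    refine ⟨mul_mem hG kG, ?_, ?_⟩
    · have hid : A1 * (h * k) * A1⁻¹ * (h * k)⁻¹ =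
          (A1 * h * A1⁻¹ * h⁻¹) * (h * (A1 * k * A1⁻¹ * k⁻¹) * h⁻¹) := by group
      rw [hid]
      exact mul_mem h1 (N_conj hG k1)
    · have hid : A3 * (h * k) * A3⁻¹ * (h * k)⁻¹ =
          (A3 * h * A3⁻¹ * h⁻¹) * (h * (A3 * k * A3⁻¹ * k⁻¹) * h⁻¹) := by group
      rw [hid]
      exact mul_mem h3 (N_conj hG k3)
  inv_mem' := by
    rintro h ⟨hG, h1, h3⟩
    refine ⟨inv_mem hG, ?_, ?_⟩
    · have hid : A1 * h⁻¹ * A1⁻¹ * h⁻¹⁻¹ =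
          h⁻¹ * (A1 * h * A1⁻¹ * h⁻¹)⁻¹ * h⁻¹⁻¹ := by group
      rw [hid]
      exact N_conj (inv_mem hG) (inv_mem h1)
    · have hid : A3 * h⁻¹ * A3⁻¹ * h⁻¹⁻¹ =
          h⁻¹ * (A3 * h * A3⁻¹ * h⁻¹)⁻¹ * h⁻¹⁻¹ := by group
      rw [hid]
      exact N_conj (inv_mem hG) (inv_mem h3)

lemma D_isClosed : IsClosed ((Dgrp : Subgroup OmegaSG) : Set OmegaSG) := by
  have h1 : IsClosed {h : OmegaSG | A1 * h * A1⁻¹ * h⁻¹ ∈ Ngrp} := by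
    have : {h : OmegaSG | A1 * h * A1⁻¹ * h⁻¹ ∈ Ngrp} =
        (fun h : OmegaSG => A1 * h * A1⁻¹ * h⁻¹) ⁻¹' (Ngrp : Set OmegaSG) := rfl
    rw [this]
    exact IsClosed.preimage
      (((continuous_const.mul continuous_id).mul continuous_const).mul continuous_inv)
      N_isClosed
  have h3 : IsClosed {h : OmegaSG | A3 * h * A3⁻¹ * h⁻¹ ∈ Ngrp} := by
    have : {h : OmegaSG | A3 * h * A3⁻¹ * h⁻¹ ∈ Ngrp} =
        (fun h : OmegaSG => A3 * h * A3⁻¹ * h⁻¹) ⁻¹' (Ngrp : Set OmegaSG) := rfl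
    rw [this]
    exact IsClosed.preimage
      (((continuous_const.mul continuous_id).mul continuous_const).mul continuous_inv)
      N_isClosed
  have : ((Dgrp : Subgroup OmegaSG) : Set OmegaSG) =
      (Ggrp : Set OmegaSG) ∩ ({h : OmegaSG | A1 * h * A1⁻¹ * h⁻¹ ∈ Ngrp} ∩
        {h : OmegaSG | A3 * h * A3⁻¹ * h⁻¹ ∈ Ngrp}) := by
    ext h
    simp only [Set.mem_inter_iff, Set.mem_setOf_eq, SetLike.mem_coe]
    exact ⟨fun ⟨a, b, c⟩ => ⟨a, b, c⟩, fun ⟨a, b, c⟩ => ⟨a, b, c⟩⟩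
  rw [this]
  exact (Subgroup.isClosed_topologicalClosure _).inter (h1.inter h3)

lemma Ggrp_le_D : Ggrp ≤ Dgrp := by
  apply Ggrp_le D_isClosed
  · refine ⟨A1_mem_G, ?_, ?_⟩
    · have : A1 * A1 * A1⁻¹ * A1⁻¹ = 1 := by group
      rw [this]; exact one_mem _
    · have h1 : A3 * A1 * A3⁻¹ * A1⁻¹ = (A1 * A3 * A1⁻¹ * A3⁻¹)⁻¹ := by group
      have h2 : A1 * A3 * A1⁻¹ * A3⁻¹ = A1 * A3 * A1 * A3⁻¹ := by rw [A1_inv]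
      rw [h1, h2]
      exact inv_mem beta1_mem_N
  · refine ⟨A3_mem_G, ?_, ?_⟩
    · have : A1 * A3 * A1⁻¹ * A3⁻¹ = A1 * A3 * A1 * A3⁻¹ := by rw [A1_inv]
      rw [this]; exact beta1_mem_N
    · have : A3 * A3 * A3⁻¹ * A3⁻¹ = 1 := by group
      rw [this]; exact one_mem _

/-- Second auxiliary subgroup. -/
noncomputable def Cgrp : Subgroup OmegaSG where
  carrier := {g | g ∈ Ggrp ∧ ∀ h, h ∈ Ggrp → g * h * g⁻¹ * h⁻¹ ∈ Ngrp}
  one_mem' := ⟨one_mem _, fun h _ => by simpa using one_mem Ngrp⟩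
  mul_mem' := by
    rintro g k ⟨gG, hg⟩ ⟨kG, hk⟩
    refine ⟨mul_mem gG kG, fun h hh => ?_⟩
    have hid : (g * k) * h * (g * k)⁻¹ * h⁻¹ =
        (g * (k * h * k⁻¹ * h⁻¹) * g⁻¹) * (g * h * g⁻¹ * h⁻¹) := by group
    rw [hid]
    exact mul_mem (N_conj gG (hk h hh)) (hg h hh)
  inv_mem' := by
    rintro g ⟨gG, hg⟩
    refine ⟨inv_mem gG, fun h hh => ?_⟩
    have hid : g⁻¹ * h * g⁻¹⁻¹ * h⁻¹ = g⁻¹ * (g * h * g⁻¹ * h⁻¹)⁻¹ * g⁻¹⁻¹ := by group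
    rw [hid]
    exact N_conj (inv_mem gG) (inv_mem (hg h hh))

lemma C_isClosed : IsClosed ((Cgrp : Subgroup OmegaSG) : Set OmegaSG) := by
  have : ((Cgrp : Subgroup OmegaSG) : Set OmegaSG) =
      (Ggrp : Set OmegaSG) ∩ ⋂ (h : OmegaSG), ⋂ (_ : h ∈ Ggrp),
        (fun g : OmegaSG => g * h * g⁻¹ * h⁻¹) ⁻¹' (Ngrp : Set OmegaSG) := by
    ext g
    simp only [Set.mem_inter_iff, Set.mem_iInter, Set.mem_preimage, SetLike.mem_coe]
    exact ⟨fun ⟨a, b⟩ => ⟨a, b⟩, fun ⟨a, b⟩ => ⟨a, b⟩⟩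
  rw [this]
  refine (Subgroup.isClosed_topologicalClosure _).inter ?_
  refine isClosed_iInter fun h => isClosed_iInter fun _ => ?_
  exact IsClosed.preimage
    (((continuous_id.mul continuous_const).mul continuous_inv).mul continuous_const)
    N_isClosed

lemma comm_mem_N {g h : OmegaSG} (hg : g ∈ Ggrp) (hh : h ∈ Ggrp) :
    g * h * g⁻¹ * h⁻¹ ∈ Ngrp := by
  have hC : Ggrp ≤ Cgrp := by
    apply Ggrp_le C_isClosed
    · exact ⟨A1_mem_G, fun h hh => (Ggrp_le_D hh).2.1⟩
    · exact ⟨A3_mem_G, fun h hh => (Ggrp_le_D hh).2.2⟩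
  exact (hC hg).2 h hh

lemma beta2_mem_N : A3⁻¹ * A1 * A3 * A1 ∈ Ngrp := by
  have hid : A3⁻¹ * A1 * A3 * A1 = A3⁻¹ * A1 * A3⁻¹⁻¹ * A1⁻¹ := by
    rw [A1_inv]; group
  rw [hid]
  exact comm_mem_N (inv_mem A3_mem_G) A1_mem_G

end ClosureMachinery

/-! ### The sign character at level 1, and `H₁ ⊓ H₃ = N` -/

section SignChar

/-- The sign character at level 1. -/
noncomputable def chi : OmegaSG →* ℤˣ := Equiv.Perm.sign.comp (levelHom 1)

lemma len_one_cases {w : Wd} (hw : w.length = 1) : w = [false] ∨ w = [true] := by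
  cases w with
  | nil => simp at hw
  | cons b t =>
    cases t with
    | nil => cases b; exacts [Or.inl rfl, Or.inr rfl]
    | cons c t' => simp at hw

lemma apply_true_of_false {g : OmegaSG} (h : (g : Equiv.Perm Wd) [false] = [false]) :
    (g : Equiv.Perm Wd) [true] = [true] := by
  have hlen : ((g : Equiv.Perm Wd) [true]).length = 1 := mem_omega_length g.2 [true]
  rcases len_one_cases hlen with h' | h'
  · exfalso
    have := (g : Equiv.Perm Wd).injective (h'.trans h.symm)
    simp at this
  · exact h'

lemma apply_false_of_true {g : OmegaSG} (h : (g : Equiv.Perm Wd) [false] = [true]) :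
    (g : Equiv.Perm Wd) [true] = [false] := by
  have hlen : ((g : Equiv.Perm Wd) [true]).length = 1 := mem_omega_length g.2 [true]
  rcases len_one_cases hlen with h' | h'
  · exact h'
  · exfalso
    have := (g : Equiv.Perm Wd).injective (h'.trans h.symm)
    simp at this

lemma chi_eq_one_of (g : OmegaSG) (h : (g : Equiv.Perm Wd) [false] = [false]) : chi g = 1 := by
  have hlp : levelHom 1 g = 1 := by
    apply Equiv.ext
    rintro ⟨w, hw⟩
    rcases len_one_cases hw with rfl | rfl
    · exact Subtype.ext h
    · exact Subtype.ext (apply_true_of_false h)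
  show Equiv.Perm.sign (levelHom 1 g) = 1
  rw [hlp, map_one]

lemma chi_eq_neg_one_of (g : OmegaSG) (h : (g : Equiv.Perm Wd) [false] = [true]) :
    chi g = -1 := by
  have hne : (⟨[false], rfl⟩ : Lv 1) ≠ (⟨[true], rfl⟩ : Lv 1) := by
    intro hc
    simpa using congrArg Subtype.val hc
  have hlp : levelHom 1 g = Equiv.swap (⟨[false], rfl⟩ : Lv 1) (⟨[true], rfl⟩ : Lv 1) := by
    apply Equiv.ext
    rintro ⟨w, hw⟩
    rcases len_one_cases hw with rfl | rfl
    · have h1 : (⟨[false], hw⟩ : Lv 1) = ⟨[false], rfl⟩ := rfl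
      rw [h1, Equiv.swap_apply_left]
      exact Subtype.ext h
    · have h1 : (⟨[true], hw⟩ : Lv 1) = ⟨[true], rfl⟩ := rfl
      rw [h1, Equiv.swap_apply_right]
      exact Subtype.ext (apply_false_of_true h)
  show Equiv.Perm.sign (levelHom 1 g) = -1
  rw [hlp, Equiv.Perm.sign_swap hne]

lemma chi_A1 : chi A1 = -1 := chi_eq_neg_one_of A1 rfl

lemma chi_A3 : chi A3 = 1 := chi_eq_one_of A3 rfl

lemma chi_eq_one_iff (g : OmegaSG) : chi g = 1 ↔ (g : Equiv.Perm Wd) [false] = [false] := by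
  constructor
  · intro h
    by_contra hc
    have hlen : ((g : Equiv.Perm Wd) [false]).length = 1 := mem_omega_length g.2 [false]
    rcases len_one_cases hlen with h' | h'
    · exact hc h'
    · rw [chi_eq_neg_one_of g h'] at h
      exact absurd h (by decide)
  · exact chi_eq_one_of g

lemma isClosed_chi_ker : IsClosed ((chi.ker : Subgroup OmegaSG) : Set OmegaSG) := by
  have he : ((chi.ker : Subgroup OmegaSG) : Set OmegaSG) =
      (fun g : OmegaSG => (g : Equiv.Perm Wd) [false]) ⁻¹' {[false]} := by
    ext g
    simp only [SetLike.mem_coe, MonoidHom.mem_ker, Set.mem_preimage, Set.mem_singleton_iff]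
    exact chi_eq_one_iff g
  rw [he]
  exact IsClosed.preimage (continuous_omApply [false]) (isClosed_discrete _)

lemma N_le_chi_ker : Ngrp ≤ chi.ker := by
  apply nclG_le isClosed_chi_ker
  intro g _
  rw [MonoidHom.mem_ker]
  have hval : chi (A1 * A3 * A1 * A3⁻¹) = 1 := by
    rw [map_mul, map_mul, map_mul, map_inv, chi_A1, chi_A3]
    decide
  rw [map_mul, map_mul, hval, mul_one, map_inv, mul_inv_cancel]

lemma H3_le_chi_ker : H3grp ≤ chi.ker := by
  apply nclG_le isClosed_chi_ker
  intro g _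
  rw [MonoidHom.mem_ker, map_mul, map_mul, map_inv, chi_A3, mul_one, mul_inv_cancel]

/-- `N ∪ a₁N` as a subgroup. -/
noncomputable def M1grp : Subgroup OmegaSG where
  carrier := (Ngrp : Set OmegaSG) ∪ (fun x => A1 * x) '' (Ngrp : Set OmegaSG)
  one_mem' := Or.inl (one_mem _)
  mul_mem' := by
    rintro x y (hx | ⟨n, hn, rfl⟩) (hy | ⟨m, hm, rfl⟩)
    · exact Or.inl (mul_mem hx hy)
    · -- x * (A1 * m) = A1 * ((A1 * x * A1) * m)
      have hconj : A1 * x * A1 ∈ Ngrp := by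
        have := N_conj A1_mem_G hx
        rwa [A1_inv] at this
      refine Or.inr ⟨(A1 * x * A1) * m, mul_mem hconj hm, ?_⟩
      show A1 * ((A1 * x * A1) * m) = x * (A1 * m)
      rw [show A1 * ((A1 * x * A1) * m) = (A1 * A1) * (x * (A1 * m)) from by group,
        A1_sq, one_mul]
    · exact Or.inr ⟨n * y, mul_mem hn hy, by group⟩
    · -- (A1 * n) * (A1 * m) = (A1 * n * A1) * m
      have hconj : A1 * n * A1 ∈ Ngrp := by
        have := N_conj A1_mem_G hn
        rwa [A1_inv] at this
      refine Or.inl ?_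
      show A1 * n * (A1 * m) ∈ Ngrp
      rw [show A1 * n * (A1 * m) = (A1 * n * A1) * m from by group]
      exact mul_mem hconj hm
  inv_mem' := by
    rintro x (hx | ⟨n, hn, rfl⟩)
    · exact Or.inl (inv_mem hx)
    · have hconj : A1 * n⁻¹ * A1 ∈ Ngrp := by
        have := N_conj A1_mem_G (inv_mem hn)
        rwa [A1_inv] at this
      refine Or.inr ⟨A1 * n⁻¹ * A1, hconj, ?_⟩
      show A1 * (A1 * n⁻¹ * A1) = (A1 * n)⁻¹
      rw [show A1 * (A1 * n⁻¹ * A1) = (A1 * A1) * (n⁻¹ * A1) from by group, A1_sq, one_mul,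
        mul_inv_rev, A1_inv]

lemma M1_isClosed : IsClosed ((M1grp : Subgroup OmegaSG) : Set OmegaSG) := by
  refine IsClosed.union N_isClosed ?_
  exact (Homeomorph.mulLeft A1).isClosedMap _ N_isClosed

lemma H1_le_M1 : H1grp ≤ M1grp := by
  apply nclG_le M1_isClosed
  intro g hg
  have hcomm : A1⁻¹ * g * A1⁻¹⁻¹ * g⁻¹ ∈ Ngrp := comm_mem_N (inv_mem A1_mem_G) hg
  refine Or.inr ⟨A1⁻¹ * g * A1⁻¹⁻¹ * g⁻¹, hcomm, ?_⟩
  show A1 * (A1⁻¹ * g * A1⁻¹⁻¹ * g⁻¹) = g * A1 * g⁻¹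
  group

lemma H1_inter_H3_eq_N : H1grp ⊓ H3grp = Ngrp := by
  apply le_antisymm
  · intro x hx
    rw [Subgroup.mem_inf] at hx
    rcases H1_le_M1 hx.1 with h | ⟨n, hn, rfl⟩
    · exact h
    · exfalso
      have h3 : chi (A1 * n) = 1 := H3_le_chi_ker hx.2
      rw [map_mul, chi_A1, N_le_chi_ker hn, mul_one] at h3
      exact absurd h3 (by decide)
  · rw [le_inf_iff]
    constructor
    · apply nclG_le (nclG_isClosed A1)
      intro g hg
      rw [show g * (A1 * A3 * A1 * A3⁻¹) * g⁻¹ =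
          (g * A1 * g⁻¹) * ((g * A3) * A1 * (g * A3)⁻¹) from by group]
      exact mul_mem (mem_nclG_gen A1 hg) (mem_nclG_gen A1 (mul_mem hg A3_mem_G))
    · apply nclG_le (nclG_isClosed A3)
      intro g hg
      rw [show A1 * A3 * A1 * A3⁻¹ = A1 * A3 * A1⁻¹ * A3⁻¹ from by rw [A1_inv]]
      rw [show g * (A1 * A3 * A1⁻¹ * A3⁻¹) * g⁻¹ =
          ((g * A1) * A3 * (g * A1)⁻¹) * (g * A3 * g⁻¹)⁻¹ from by group]
      exact mul_mem (mem_nclG_gen A3 (mul_mem hg A1_mem_G))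
        (inv_mem (mem_nclG_gen A3 hg))

end SignChar

/-! ### `U` is the closure of `⟨γ₁,γ₂⟩`, abelian and normal in `G` -/

section Uprops

/-- The subgroup generated by `γ₁, γ₂`. -/
def Agrp : Subgroup OmegaSG := Subgroup.closure {g1, g2}
/-- Its topological closure. -/
noncomputable def Abar : Subgroup OmegaSG := Agrp.topologicalClosure

lemma g1_mem_A : g1 ∈ Agrp := Subgroup.subset_closure (by simp)
lemma g2_mem_A : g2 ∈ Agrp := Subgroup.subset_closure (by simp)
lemma A_le_Abar : Agrp ≤ Abar := Subgroup.le_topologicalClosure _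
lemma Abar_isClosed : IsClosed ((Abar : Subgroup OmegaSG) : Set OmegaSG) :=
  Subgroup.isClosed_topologicalClosure _

lemma isClosed_centralizer (s : Set OmegaSG) :
    IsClosed ((Subgroup.centralizer s : Subgroup OmegaSG) : Set OmegaSG) := by
  have he : ((Subgroup.centralizer s : Subgroup OmegaSG) : Set OmegaSG) =
      ⋂ (y : OmegaSG), ⋂ (_ : y ∈ s), {x : OmegaSG | y * x = x * y} := by
    ext x
    simp only [SetLike.mem_coe, Subgroup.mem_centralizer_iff, Set.mem_iInter, Set.mem_setOf_eq]
  rw [he]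
  refine isClosed_iInter fun y => isClosed_iInter fun _ => ?_
  exact isClosed_eq (continuous_const.mul continuous_id) (continuous_id.mul continuous_const)

lemma Abar_comm : ∀ x ∈ Abar, ∀ y ∈ Abar, x * y = y * x := by
  have step1 : Abar ≤ Subgroup.centralizer {g1, g2} := by
    apply Subgroup.topologicalClosure_minimal _ _ (isClosed_centralizer _)
    show Subgroup.closure {g1, g2} ≤ _
    rw [Subgroup.closure_le]
    intro z hz
    simp only [Set.mem_insert_iff, Set.mem_singleton_iff] at hz
    rw [SetLike.mem_coe, Subgroup.mem_centralizer_iff]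
    rcases hz with rfl | rfl
    · rintro y hy
      simp only [Set.mem_insert_iff, Set.mem_singleton_iff] at hy
      rcases hy with rfl | rfl
      · rfl
      · exact g1g2_comm.symm
    · rintro y hy
      simp only [Set.mem_insert_iff, Set.mem_singleton_iff] at hy
      rcases hy with rfl | rfl
      · exact g1g2_comm
      · rfl
  have step2 : Abar ≤ Subgroup.centralizer (Abar : Set OmegaSG) := by
    apply Subgroup.topologicalClosure_minimal _ _ (isClosed_centralizer _)
    show Subgroup.closure {g1, g2} ≤ _
    rw [Subgroup.closure_le]
    intro z hz
    rw [SetLike.mem_coe, Subgroup.mem_centralizer_iff]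
    intro y hy
    have := step1 hy
    rw [Subgroup.mem_centralizer_iff] at this
    exact (this z hz).symm
  intro x hx y hy
  have := step2 hy
  rw [Subgroup.mem_centralizer_iff] at this
  exact this x hx

lemma conj_mem_of_closure {s : Set OmegaSG} {c : OmegaSG}
    (h : ∀ y ∈ s, c * y * c⁻¹ ∈ Subgroup.closure s) :
    ∀ y ∈ Subgroup.closure s, c * y * c⁻¹ ∈ Subgroup.closure s := by
  intro y hy
  have h1 : (MulAut.conj c).toMonoidHom y ∈
      Subgroup.map (MulAut.conj c).toMonoidHom (Subgroup.closure s) :=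
    Subgroup.mem_map_of_mem _ hy
  rw [MonoidHom.map_closure] at h1
  have h2 : Subgroup.closure ((MulAut.conj c).toMonoidHom '' s) ≤ Subgroup.closure s := by
    rw [Subgroup.closure_le]
    rintro _ ⟨z, hz, rfl⟩
    have := h z hz
    simpa [MulAut.conj_apply] using this
  have h3 := h2 h1
  simpa [MulAut.conj_apply] using h3

lemma conj_mem_topClosure {K : Subgroup OmegaSG} {c : OmegaSG}
    (h : ∀ y ∈ K, c * y * c⁻¹ ∈ K) {x : OmegaSG} (hx : x ∈ K.topologicalClosure) :
    c * x * c⁻¹ ∈ K.topologicalClosure := by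
  have hx' : x ∈ closure (K : Set OmegaSG) := by
    rw [← Subgroup.topologicalClosure_coe]; exact hx
  have himg : (fun y : OmegaSG => c * y * c⁻¹) '' closure (K : Set OmegaSG) ⊆
      closure (K : Set OmegaSG) := by
    refine (image_closure_subset_closure_image (continuous_conjBy c)).trans ?_
    apply closure_mono
    rintro _ ⟨y, hy, rfl⟩
    exact h y hy
  have : c * x * c⁻¹ ∈ closure (K : Set OmegaSG) := himg ⟨x, hx', rfl⟩
  rw [← Subgroup.topologicalClosure_coe] at this
  exact this

lemma conj_A3_g1' : A3 * g1 * A3⁻¹ = g2⁻¹ := by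
  have h : g2 = A3 * g1⁻¹ * A3⁻¹ := by
    have := congrArg (fun z => A3 * z * A3⁻¹) conj_A3_g2
    rw [show A3 * (A3⁻¹ * g2 * A3) * A3⁻¹ = g2 from by group] at this
    rw [this]
  rw [h]
  group

lemma conj_A3_g2' : A3 * g2 * A3⁻¹ = g1 := by
  have := congrArg (fun z => A3 * z * A3⁻¹) conj_A3_g1
  rw [show A3 * (A3⁻¹ * g1 * A3) * A3⁻¹ = g1 from by group] at this
  exact this.symm

lemma conj_Abar {c : OmegaSG} (h1 : c * g1 * c⁻¹ ∈ Agrp) (h2 : c * g2 * c⁻¹ ∈ Agrp) :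
    ∀ x ∈ Abar, c * x * c⁻¹ ∈ Abar := by
  intro x hx
  apply conj_mem_topClosure (K := Agrp) ?_ hx
  apply conj_mem_of_closure
  intro y hy
  simp only [Set.mem_insert_iff, Set.mem_singleton_iff] at hy
  rcases hy with rfl | rfl
  exacts [h1, h2]

/-- The subgroup of elements whose conjugation preserves `Abar`. -/
noncomputable def SAgrp : Subgroup OmegaSG where
  carrier := {c | (∀ x ∈ Abar, c * x * c⁻¹ ∈ Abar) ∧ (∀ x ∈ Abar, c⁻¹ * x * c ∈ Abar)}
  one_mem' := ⟨fun x hx => by simpa using hx, fun x hx => by simpa using hx⟩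
  mul_mem' := by
    rintro c d ⟨hc1, hc2⟩ ⟨hd1, hd2⟩
    constructor
    · intro x hx
      rw [show (c * d) * x * (c * d)⁻¹ = c * (d * x * d⁻¹) * c⁻¹ from by group]
      exact hc1 _ (hd1 x hx)
    · intro x hx
      rw [show (c * d)⁻¹ * x * (c * d) = d⁻¹ * (c⁻¹ * x * c) * d from by group]
      exact hd2 _ (hc2 x hx)
  inv_mem' := by
    rintro c ⟨hc1, hc2⟩
    constructor
    · intro x hx
      rw [show c⁻¹ * x * c⁻¹⁻¹ = c⁻¹ * x * c from by group]
      exact hc2 x hx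
    · intro x hx
      rw [show c⁻¹⁻¹ * x * c⁻¹ = c * x * c⁻¹ from by group]
      exact hc1 x hx

lemma SA_isClosed : IsClosed ((SAgrp : Subgroup OmegaSG) : Set OmegaSG) := by
  have he : ((SAgrp : Subgroup OmegaSG) : Set OmegaSG) =
      (⋂ (x : OmegaSG), ⋂ (_ : x ∈ Abar),
        (fun c : OmegaSG => c * x * c⁻¹) ⁻¹' (Abar : Set OmegaSG)) ∩
      (⋂ (x : OmegaSG), ⋂ (_ : x ∈ Abar),
        (fun c : OmegaSG => c⁻¹ * x * c) ⁻¹' (Abar : Set OmegaSG)) := by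
    ext c
    simp only [Set.mem_inter_iff, Set.mem_iInter, Set.mem_preimage, SetLike.mem_coe]
    exact ⟨fun ⟨a, b⟩ => ⟨a, b⟩, fun ⟨a, b⟩ => ⟨a, b⟩⟩
  rw [he]
  refine IsClosed.inter ?_ ?_ <;>
    refine isClosed_iInter fun x => isClosed_iInter fun _ => ?_
  · exact IsClosed.preimage
      ((continuous_id.mul continuous_const).mul continuous_inv) Abar_isClosed
  · exact IsClosed.preimage
      ((continuous_inv.mul continuous_const).mul continuous_id) Abar_isClosed

lemma G_le_SA : Ggrp ≤ SAgrp := by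
  apply Ggrp_le SA_isClosed
  · constructor
    · apply conj_Abar
      · rw [A1_inv, conj_A1_g1]; exact inv_mem g1_mem_A
      · rw [A1_inv, conj_A1_g2]; exact inv_mem g2_mem_A
    · intro x hx
      rw [show A1⁻¹ * x * A1 = A1⁻¹ * x * A1⁻¹⁻¹ from by group, A1_inv]
      have := conj_Abar (c := A1) ?_ ?_ x hx
      · rwa [A1_inv] at this
      · rw [A1_inv, conj_A1_g1]; exact inv_mem g1_mem_A
      · rw [A1_inv, conj_A1_g2]; exact inv_mem g2_mem_A
  · constructor
    · apply conj_Abar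
      · rw [conj_A3_g1']; exact inv_mem g2_mem_A
      · rw [conj_A3_g2']; exact g1_mem_A
    · have := conj_Abar (c := A3⁻¹) ?_ ?_
      · intro x hx
        have h := this x hx
        rwa [inv_inv] at h
      · rw [inv_inv, conj_A3_g1]; exact g2_mem_A
      · rw [inv_inv, conj_A3_g2]; exact inv_mem g1_mem_A

lemma g1_mem_U : g1 ∈ Ugrp := mem_nclG_self _

lemma g2_mem_U : g2 ∈ Ugrp := by
  have := mem_nclG_gen (A2 * A3⁻¹) (inv_mem A3_mem_G)
  rwa [show A3⁻¹ * (A2 * A3⁻¹) * A3⁻¹⁻¹ = A3⁻¹ * A2 from by group] at this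

lemma U_eq_Abar : Ugrp = Abar := by
  apply le_antisymm
  · apply nclG_le Abar_isClosed
    intro g hg
    exact (G_le_SA hg).1 g1 (A_le_Abar g1_mem_A)
  · apply Subgroup.topologicalClosure_minimal _ _ (nclG_isClosed _)
    show Subgroup.closure {g1, g2} ≤ _
    rw [Subgroup.closure_le]
    intro z hz
    simp only [Set.mem_insert_iff, Set.mem_singleton_iff] at hz
    rcases hz with rfl | rfl
    exacts [g1_mem_U, g2_mem_U]

lemma U_comm : ∀ x ∈ Ugrp, ∀ y ∈ Ugrp, x * y = y * x := by
  rw [U_eq_Abar]; exact Abar_comm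

lemma U_conj {g x : OmegaSG} (hg : g ∈ Ggrp) (hx : x ∈ Ugrp) : g * x * g⁻¹ ∈ Ugrp :=
  nclG_conj_mem _ hg hx

lemma U_isClosed : IsClosed ((Ugrp : Subgroup OmegaSG) : Set OmegaSG) := nclG_isClosed _

end Uprops

/-! ### The subgroup `V = {(x,x⁻¹) : x ∈ U}` and `N = V` -/

section Vprops

/-- `V = {(x,x⁻¹) : x ∈ U}`. -/
noncomputable def Vgrp : Subgroup OmegaSG where
  carrier := {g | ∃ x ∈ Ugrp, g = pairOm x x⁻¹}
  one_mem' := ⟨1, one_mem _, by rw [inv_one, pairOm_one]⟩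
  mul_mem' := by
    rintro a b ⟨x, hx, rfl⟩ ⟨y, hy, rfl⟩
    refine ⟨x * y, mul_mem hx hy, ?_⟩
    rw [pairOm_mul, mul_inv_rev, U_comm _ (inv_mem hy) _ (inv_mem hx)]
  inv_mem' := by
    rintro a ⟨x, hx, rfl⟩
    exact ⟨x⁻¹, inv_mem hx, by rw [pairOm_inv, inv_inv]⟩

lemma V_isClosed : IsClosed ((Vgrp : Subgroup OmegaSG) : Set OmegaSG) := by
  have he : ((Vgrp : Subgroup OmegaSG) : Set OmegaSG) =
      (fun x : OmegaSG => pairOm x x⁻¹) '' (Ugrp : Set OmegaSG) := by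
    ext g
    constructor
    · rintro ⟨x, hx, rfl⟩; exact ⟨x, hx, rfl⟩
    · rintro ⟨x, hx, rfl⟩; exact ⟨x, hx, rfl⟩
  rw [he]
  exact ((U_isClosed.isCompact).image continuous_psi).isClosed

lemma beta1_mem_V : A1 * A3 * A1 * A3⁻¹ ∈ Vgrp :=
  ⟨g1⁻¹, inv_mem g1_mem_U, by rw [inv_inv, beta1_pair]⟩

lemma conj_A3_U : ∀ z ∈ Ugrp, A3 * z * A3⁻¹ = A2 * z * A2⁻¹ := by
  intro z hz
  have hc : g2 * z = z * g2 := U_comm g2 g2_mem_U z hz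
  calc A3 * z * A3⁻¹ = (A2 * g2⁻¹) * z * (A2 * g2⁻¹)⁻¹ := by rw [← A3_eq_A2_g2inv]
    _ = A2 * g2⁻¹ * (z * g2) * A2⁻¹ := by group
    _ = A2 * g2⁻¹ * (g2 * z) * A2⁻¹ := by rw [hc]
    _ = A2 * z * A2⁻¹ := by group

lemma conj_A3inv_U : ∀ z ∈ Ugrp, A3⁻¹ * z * A3 = A2⁻¹ * z * A2 := by
  intro z hz
  have hc : g1 * z = z * g1 := U_comm g1 g1_mem_U z hz
  have h3 : A3 = (A2⁻¹ * g1)⁻¹ := by rw [← A3inv_eq_A2inv_g1, inv_inv]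
  calc A3⁻¹ * z * A3 = (A2⁻¹ * g1) * z * (A2⁻¹ * g1)⁻¹ := by
        rw [← A3inv_eq_A2inv_g1, inv_inv]
    _ = A2⁻¹ * (g1 * z) * g1⁻¹ * A2 := by group
    _ = A2⁻¹ * (z * g1) * g1⁻¹ * A2 := by rw [hc]
    _ = A2⁻¹ * z * A2 := by group

/-- Conjugation-stabilizer of `V`. -/
noncomputable def SVgrp : Subgroup OmegaSG where
  carrier := {c | (∀ x ∈ Vgrp, c * x * c⁻¹ ∈ Vgrp) ∧ (∀ x ∈ Vgrp, c⁻¹ * x * c ∈ Vgrp)}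
  one_mem' := ⟨fun x hx => by simpa using hx, fun x hx => by simpa using hx⟩
  mul_mem' := by
    rintro c d ⟨hc1, hc2⟩ ⟨hd1, hd2⟩
    constructor
    · intro x hx
      rw [show (c * d) * x * (c * d)⁻¹ = c * (d * x * d⁻¹) * c⁻¹ from by group]
      exact hc1 _ (hd1 x hx)
    · intro x hx
      rw [show (c * d)⁻¹ * x * (c * d) = d⁻¹ * (c⁻¹ * x * c) * d from by group]
      exact hd2 _ (hc2 x hx)
  inv_mem' := by
    rintro c ⟨hc1, hc2⟩
    constructor
    · intro x hx
      rw [show c⁻¹ * x * c⁻¹⁻¹ = c⁻¹ * x * c from by group]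
      exact hc2 x hx
    · intro x hx
      rw [show c⁻¹⁻¹ * x * c⁻¹ = c * x * c⁻¹ from by group]
      exact hc1 x hx

lemma SV_isClosed : IsClosed ((SVgrp : Subgroup OmegaSG) : Set OmegaSG) := by
  have he : ((SVgrp : Subgroup OmegaSG) : Set OmegaSG) =
      (⋂ (x : OmegaSG), ⋂ (_ : x ∈ Vgrp),
        (fun c : OmegaSG => c * x * c⁻¹) ⁻¹' (Vgrp : Set OmegaSG)) ∩
      (⋂ (x : OmegaSG), ⋂ (_ : x ∈ Vgrp),
        (fun c : OmegaSG => c⁻¹ * x * c) ⁻¹' (Vgrp : Set OmegaSG)) := by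
    ext c
    simp only [Set.mem_inter_iff, Set.mem_iInter, Set.mem_preimage, SetLike.mem_coe]
    exact ⟨fun ⟨a, b⟩ => ⟨a, b⟩, fun ⟨a, b⟩ => ⟨a, b⟩⟩
  rw [he]
  refine IsClosed.inter ?_ ?_ <;>
    refine isClosed_iInter fun x => isClosed_iInter fun _ => ?_
  · exact IsClosed.preimage
      ((continuous_id.mul continuous_const).mul continuous_inv) V_isClosed
  · exact IsClosed.preimage
      ((continuous_inv.mul continuous_const).mul continuous_id) V_isClosed

lemma A1_conj_V : ∀ x ∈ Vgrp, A1 * x * A1⁻¹ ∈ Vgrp := by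
  rintro _ ⟨x, hx, rfl⟩
  refine ⟨x⁻¹, inv_mem hx, ?_⟩
  rw [A1_inv, A1_pair_A1, inv_inv]

lemma A3_conj_V : ∀ x ∈ Vgrp, A3 * x * A3⁻¹ ∈ Vgrp := by
  rintro _ ⟨x, hx, rfl⟩
  have hA3i : (A3 : OmegaSG)⁻¹ = pairOm A2⁻¹ A3⁻¹ := by rw [← pairOm_inv, ← A3_pair]
  refine ⟨A2 * x * A2⁻¹, U_conj A2_mem_G hx, ?_⟩
  calc A3 * pairOm x x⁻¹ * A3⁻¹
      = pairOm A2 A3 * pairOm x x⁻¹ * pairOm A2⁻¹ A3⁻¹ := by rw [← A3_pair, ← hA3i]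
    _ = pairOm (A2 * x * A2⁻¹) (A3 * x⁻¹ * A3⁻¹) := by rw [pairOm_mul, pairOm_mul]
    _ = pairOm (A2 * x * A2⁻¹) (A2 * x⁻¹ * A2⁻¹) := by rw [conj_A3_U x⁻¹ (inv_mem hx)]
    _ = pairOm (A2 * x * A2⁻¹) (A2 * x * A2⁻¹)⁻¹ := by
        rw [show (A2 * x * A2⁻¹)⁻¹ = A2 * x⁻¹ * A2⁻¹ from by group]

lemma A3inv_conj_V : ∀ x ∈ Vgrp, A3⁻¹ * x * A3 ∈ Vgrp := by
  rintro _ ⟨x, hx, rfl⟩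
  have hA3i : (A3 : OmegaSG)⁻¹ = pairOm A2⁻¹ A3⁻¹ := by rw [← pairOm_inv, ← A3_pair]
  refine ⟨A2⁻¹ * x * A2, ?_, ?_⟩
  · have := U_conj (inv_mem A2_mem_G) hx
    rwa [inv_inv] at this
  calc A3⁻¹ * pairOm x x⁻¹ * A3
      = pairOm A2⁻¹ A3⁻¹ * pairOm x x⁻¹ * pairOm A2 A3 := by rw [← A3_pair, ← hA3i]
    _ = pairOm (A2⁻¹ * x * A2) (A3⁻¹ * x⁻¹ * A3) := by rw [pairOm_mul, pairOm_mul]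
    _ = pairOm (A2⁻¹ * x * A2) (A2⁻¹ * x⁻¹ * A2) := by rw [conj_A3inv_U x⁻¹ (inv_mem hx)]
    _ = pairOm (A2⁻¹ * x * A2) (A2⁻¹ * x * A2)⁻¹ := by
        rw [show (A2⁻¹ * x * A2)⁻¹ = A2⁻¹ * x⁻¹ * A2 from by group]

lemma G_le_SV : Ggrp ≤ SVgrp := by
  apply Ggrp_le SV_isClosed
  · constructor
    · exact A1_conj_V
    · intro x hx
      rw [show A1⁻¹ * x * A1 = A1 * x * A1⁻¹ from by rw [A1_inv]]
      exact A1_conj_V x hx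
  · exact ⟨A3_conj_V, A3inv_conj_V⟩

lemma N_le_V : Ngrp ≤ Vgrp := by
  apply nclG_le V_isClosed
  intro g hg
  exact (G_le_SV hg).1 _ beta1_mem_V

/-- Auxiliary subgroup for `V ≤ N`. -/
noncomputable def Tgrp : Subgroup OmegaSG where
  carrier := {x | x ∈ Ugrp ∧ pairOm x x⁻¹ ∈ Ngrp}
  one_mem' := ⟨one_mem _, by rw [inv_one, pairOm_one]; exact one_mem _⟩
  mul_mem' := by
    rintro x y ⟨hx, hx'⟩ ⟨hy, hy'⟩
    refine ⟨mul_mem hx hy, ?_⟩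
    rw [show ((x * y)⁻¹ : OmegaSG) = y⁻¹ * x⁻¹ from by group,
      U_comm _ (inv_mem hy) _ (inv_mem hx), ← pairOm_mul]
    exact mul_mem hx' hy'
  inv_mem' := by
    rintro x ⟨hx, hx'⟩
    refine ⟨inv_mem hx, ?_⟩
    rw [show pairOm x⁻¹ x⁻¹⁻¹ = (pairOm x x⁻¹)⁻¹ from by rw [pairOm_inv, inv_inv]]
    exact inv_mem hx'

lemma T_isClosed : IsClosed ((Tgrp : Subgroup OmegaSG) : Set OmegaSG) := by
  have he : ((Tgrp : Subgroup OmegaSG) : Set OmegaSG) =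
      (Ugrp : Set OmegaSG) ∩ (fun x : OmegaSG => pairOm x x⁻¹) ⁻¹' (Ngrp : Set OmegaSG) := rfl
  rw [he]
  exact U_isClosed.inter (IsClosed.preimage continuous_psi N_isClosed)

lemma U_le_T : Ugrp ≤ Tgrp := by
  rw [U_eq_Abar]
  apply Subgroup.topologicalClosure_minimal _ _ T_isClosed
  show Subgroup.closure {g1, g2} ≤ _
  rw [Subgroup.closure_le]
  intro z hz
  simp only [Set.mem_insert_iff, Set.mem_singleton_iff] at hz
  rcases hz with rfl | rfl
  · refine ⟨g1_mem_U, ?_⟩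
    rw [show pairOm g1 g1⁻¹ = (pairOm g1⁻¹ g1⁻¹⁻¹)⁻¹ from by simp [pairOm_inv],
      inv_inv, ← beta1_pair]
    exact inv_mem beta1_mem_N
  · refine ⟨g2_mem_U, ?_⟩
    rw [show pairOm g2 g2⁻¹ = (pairOm g2⁻¹ g2⁻¹⁻¹)⁻¹ from by simp [pairOm_inv],
      inv_inv, ← beta2_pair]
    exact inv_mem beta2_mem_N

lemma V_le_N : Vgrp ≤ Ngrp := by
  rintro _ ⟨x, hx, rfl⟩
  exact (U_le_T hx).2

lemma main_iff (g : OmegaSG) : g ∈ H1grp ⊓ H3grp ↔ ∃ x ∈ Ugrp, g = pairOm x x⁻¹ := by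
  rw [H1_inter_H3_eq_N]
  constructor
  · intro hg
    exact N_le_V hg
  · intro hg
    exact V_le_N hg

end Vprops
/-- `H₁ ∩ H₃ = {(x, x⁻¹) : x ∈ U}`, and projection to the second
coordinate gives an isomorphism `H₁ ∩ H₃ ≅ U`. -/
theorem stmt9 :
    (∀ g : OmegaSG, g ∈ H1grp ⊓ H3grp ↔ ∃ x ∈ Ugrp, g = pairOm x x⁻¹) ∧
    ∃ e : ↥(H1grp ⊓ H3grp) ≃* ↥Ugrp,
      ∀ (h : ↥(H1grp ⊓ H3grp)) (x : OmegaSG),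
        (h : OmegaSG) = pairOm x x⁻¹ → ((e h : ↥Ugrp) : OmegaSG) = x⁻¹ := by
  refine ⟨main_iff, ?_⟩
  -- the homomorphism `U → H₁ ⊓ H₃`, `y ↦ (y⁻¹, y)`
  have hmem : ∀ y : ↥Ugrp, pairOm ((y : OmegaSG))⁻¹ (y : OmegaSG) ∈ H1grp ⊓ H3grp := by
    intro y
    exact (main_iff _).2 ⟨(y : OmegaSG)⁻¹, inv_mem y.2, by rw [inv_inv]⟩
  let Φ : ↥Ugrp →* ↥(H1grp ⊓ H3grp) :=
    { toFun := fun y => ⟨pairOm ((y : OmegaSG))⁻¹ (y : OmegaSG), hmem y⟩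
      map_one' := by
        apply Subtype.ext
        show pairOm ((1 : OmegaSG))⁻¹ 1 = 1
        rw [inv_one, pairOm_one]
      map_mul' := by
        intro y z
        apply Subtype.ext
        show pairOm ((y : OmegaSG) * z)⁻¹ ((y : OmegaSG) * z) =
          pairOm ((y : OmegaSG))⁻¹ y * pairOm ((z : OmegaSG))⁻¹ z
        rw [pairOm_mul,
          show ((y : OmegaSG) * z)⁻¹ = (z : OmegaSG)⁻¹ * (y : OmegaSG)⁻¹ from by group,
          U_comm _ (inv_mem z.2) _ (inv_mem y.2)] }
  have hΦval : ∀ y : ↥Ugrp, (Φ y : OmegaSG) = pairOm ((y : OmegaSG))⁻¹ (y : OmegaSG) :=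
    fun y => rfl
  have hbij : Function.Bijective Φ := by
    constructor
    · intro y z h
      have h1 : pairOm ((y : OmegaSG))⁻¹ (y : OmegaSG) =
          pairOm ((z : OmegaSG))⁻¹ (z : OmegaSG) := congrArg Subtype.val h
      have h2 := pairOm_inj_left h1
      exact Subtype.ext (inv_injective h2)
    · intro h
      obtain ⟨x, hx, hxeq⟩ := (main_iff (h : OmegaSG)).1 h.2
      refine ⟨⟨x⁻¹, inv_mem hx⟩, ?_⟩
      apply Subtype.ext
      rw [hΦval]
      show pairOm x⁻¹⁻¹ x⁻¹ = _
      rw [inv_inv, ← hxeq]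
  refine ⟨(MulEquiv.ofBijective Φ hbij).symm, ?_⟩
  intro h x hx
  set e := (MulEquiv.ofBijective Φ hbij).symm with he
  have h1 : Φ (e h) = h := (MulEquiv.ofBijective Φ hbij).apply_symm_apply h
  have h2 : pairOm ((e h : ↥Ugrp) : OmegaSG)⁻¹ ((e h : ↥Ugrp) : OmegaSG) = pairOm x x⁻¹ := by
    rw [← hx]
    exact congrArg Subtype.val h1
  have h3 := pairOm_inj_left h2
  rw [← h3, inv_inv]
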